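/- Let B = ⟨a, b ∣ a b a⁻¹ b = 1⟩ be the Klein bottle group, let G be a torsion-free group, and let f : B → G be a group homomorphism with nontrivial kernel. Then the image of f is cyclic: there exists g ∈ G such that the range of f equals the subgroup generated by g (in particular the image is trivial or infinite cyclic). -/

import Mathlib

/-- The single relator `a * b * a⁻¹ * b` of the Klein bottle group,
where `a = FreeGroup.of 0` and `b = FreeGroup.of 1`. -/
def kleinBottleRels : Set (FreeGroup (Fin 2)) :=
  {FreeGroup.of 0 * FreeGroup.of 1 * (FreeGroup.of 0)⁻¹ * FreeGroup.of 1}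

/-- The Klein bottle group `B = ⟨a, b ∣ a b a⁻¹ b = 1⟩`. -/
abbrev KleinBottleGroup : Type := PresentedGroup kleinBottleRels

/-- The generator `a` of the Klein bottle group. -/
def kleinA : KleinBottleGroup := PresentedGroup.of 0

/-- The generator `b` of the Klein bottle group. -/
def kleinB : KleinBottleGroup := PresentedGroup.of 1

lemma klein_rel : kleinA * kleinB * kleinA⁻¹ * kleinB = 1 := by
  have h : PresentedGroup.mk kleinBottleRels
      (FreeGroup.of 0 * FreeGroup.of 1 * (FreeGroup.of 0)⁻¹ * FreeGroup.of 1) = 1 :=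
    (QuotientGroup.eq_one_iff _).mpr (Subgroup.subset_normalClosure rfl)
  simpa [kleinA, kleinB, PresentedGroup.of, map_mul, map_inv] using h

lemma klein_conj : kleinA * kleinB * kleinA⁻¹ = kleinB⁻¹ :=
  eq_inv_of_mul_eq_one_left klein_rel

lemma klein_conj_zpow (n : ℤ) : kleinA * kleinB ^ n * kleinA⁻¹ = kleinB ^ (-n) := by
  rw [← conj_zpow, klein_conj, inv_zpow, zpow_neg]

lemma klein_normal : (Subgroup.zpowers kleinB).Normal := by
  set H := Subgroup.zpowers kleinB with hH
  have htop : ∀ x : KleinBottleGroup, x ∈ Subgroup.normalizer (H : Set KleinBottleGroup) := by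
    intro x
    refine PresentedGroup.generated_by _ _ ?_ x
    intro j
    rw [Subgroup.mem_normalizer_iff]
    intro h
    fin_cases j
    · show h ∈ H ↔ kleinA * h * kleinA⁻¹ ∈ H
      constructor
      · rintro ⟨n, rfl⟩
        exact ⟨-n, (klein_conj_zpow n).symm⟩
      · rintro ⟨n, hn⟩
        refine ⟨-n, ?_⟩
        have h2 : h = kleinA⁻¹ * (kleinA * h * kleinA⁻¹) * kleinA := by group
        have h4 := klein_conj_zpow (-n)
        rw [neg_neg] at h4
        rw [h2, ← hn]
        show kleinB ^ (-n) = kleinA⁻¹ * kleinB ^ n * kleinA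
        rw [← h4]
        group
    · show h ∈ H ↔ kleinB * h * kleinB⁻¹ ∈ H
      constructor
      · rintro ⟨n, rfl⟩
        exact ⟨n, by group⟩
      · rintro ⟨n, hn⟩
        refine ⟨n, ?_⟩
        have h2 : h = kleinB⁻¹ * (kleinB * h * kleinB⁻¹) * kleinB := by group
        rw [h2, ← hn]; group
  constructor
  intro n hn g
  exact (Subgroup.mem_normalizer_iff.mp (htop g) n).mp hn

lemma klein_normal_form (x : KleinBottleGroup) :
    ∃ m n : ℤ, x = kleinA ^ m * kleinB ^ n := by
  have hnorm := klein_normal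
  set H := Subgroup.zpowers kleinB with hH
  let K : Subgroup KleinBottleGroup :=
  { carrier := {x | ∃ m : ℤ, ∃ h ∈ H, x = kleinA ^ m * h}
    one_mem' := ⟨0, 1, one_mem H, by simp⟩
    mul_mem' := by
      rintro x y ⟨m, h, hh, rfl⟩ ⟨p, h', hh', rfl⟩
      refine ⟨m + p, (kleinA ^ (-p) * h * kleinA ^ p) * h', ?_, ?_⟩
      · exact mul_mem (by simpa using hnorm.conj_mem h hh (kleinA ^ (-p))) hh'
      · group
    inv_mem' := by
      rintro x ⟨m, h, hh, rfl⟩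
      refine ⟨-m, kleinA ^ m * h⁻¹ * kleinA ^ (-m), ?_, ?_⟩
      · simpa using hnorm.conj_mem h⁻¹ (inv_mem hh) (kleinA ^ m)
      · group }
  have hx : x ∈ K := by
    refine PresentedGroup.generated_by _ _ ?_ x
    intro j
    fin_cases j
    · show kleinA ∈ K
      exact ⟨1, 1, one_mem H, by rw [zpow_one, mul_one]⟩
    · show kleinB ∈ K
      exact ⟨0, kleinB, ⟨1, zpow_one kleinB⟩, by rw [zpow_zero, one_mul]⟩
  obtain ⟨m, h, ⟨n, rfl⟩, rfl⟩ := hx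
  exact ⟨m, n, rfl⟩

/-- If `G` is torsion-free and `f : B → G` is a homomorphism from the Klein bottle
group with nontrivial kernel, then the image of `f` is cyclic. -/
theorem kleinBottle_noninjective_image_cyclic {G : Type*} [Group G]
    (hG : ∀ g : G, ∀ n : ℕ, 0 < n → g ^ n = 1 → g = 1)
    (f : KleinBottleGroup →* G)
    (hf : ∃ x : KleinBottleGroup, x ≠ 1 ∧ f x = 1) :
    ∃ g : G, Set.range f = (Subgroup.zpowers g : Set G) := by
  obtain ⟨x, hx1, hxf⟩ := hf
  set A := f kleinA with hA
  set B := f kleinB with hB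
  have key : ∀ g : G, ∀ n : ℤ, n ≠ 0 → g ^ n = 1 → g = 1 := by
    intro g n hn h
    refine hG g n.natAbs (Int.natAbs_pos.mpr hn) ?_
    rcases Int.natAbs_eq n with he | he
    · rw [← zpow_natCast, ← he, h]
    · rw [← zpow_natCast, ← neg_neg ((n.natAbs : ℤ)), ← he, zpow_neg, h, inv_one]
  have hrel : A * B * A⁻¹ = B⁻¹ := by
    rw [hA, hB, ← map_inv, ← map_mul, ← map_mul, klein_conj, map_inv]
  have hform : ∀ y : KleinBottleGroup, ∃ m n : ℤ, f y = A ^ m * B ^ n := by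
    intro y
    obtain ⟨m, n, rfl⟩ := klein_normal_form y
    exact ⟨m, n, by rw [map_mul, map_zpow, map_zpow]⟩
  have hdich : A = 1 ∨ B = 1 := by
    by_contra hcon
    push_neg at hcon
    obtain ⟨hA1, hB1⟩ := hcon
    obtain ⟨m, n, hmn⟩ := klein_normal_form x
    have hone : A ^ m * B ^ n = 1 := by
      rw [← map_zpow, ← map_zpow, ← map_mul, ← hmn]; exact hxf
    have hconjn : A * B ^ n * A⁻¹ = B ^ (-n) := by
      rw [← conj_zpow, hrel, inv_zpow, zpow_neg]
    have hone2 : A ^ m * B ^ (-n) = 1 := by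
      have h3 : A * (A ^ m * B ^ n) * A⁻¹ = 1 := by rw [hone]; group
      rw [show A * (A ^ m * B ^ n) * A⁻¹ = A ^ m * (A * B ^ n * A⁻¹) by group, hconjn] at h3
      exact h3
    have e1 : A ^ m = (B ^ n)⁻¹ := mul_eq_one_iff_eq_inv.mp hone
    have e2 : A ^ m = B ^ n := by
      have := mul_eq_one_iff_eq_inv.mp hone2
      rwa [zpow_neg, inv_inv] at this
    have e3 : B ^ n = (B ^ n)⁻¹ := e2.symm.trans e1
    have hn0 : n = 0 := by
      by_contra hn
      apply hB1
      refine key B (2 * n) (by omega) ?_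
      rw [two_mul, zpow_add]
      nth_rewrite 1 [e3]
      exact inv_mul_cancel _
    have hm0 : m = 0 := by
      by_contra hm
      apply hA1
      refine key A m hm ?_
      rw [hn0] at hone
      simpa using hone
    apply hx1
    rw [hmn, hn0, hm0]; simp
  rcases hdich with h1 | h1
  · refine ⟨B, ?_⟩
    ext g
    constructor
    · rintro ⟨y, rfl⟩
      obtain ⟨m, n, hy⟩ := hform y
      rw [hy, h1]
      simp only [one_zpow, one_mul, SetLike.mem_coe]
      exact Subgroup.zpow_mem _ (Subgroup.mem_zpowers B) n
    · rintro ⟨n, rfl⟩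
      exact ⟨kleinB ^ n, by rw [map_zpow, hB]⟩
  · refine ⟨A, ?_⟩
    ext g
    constructor
    · rintro ⟨y, rfl⟩
      obtain ⟨m, n, hy⟩ := hform y
      rw [hy, h1]
      simp only [one_zpow, mul_one, SetLike.mem_coe]
      exact Subgroup.zpow_mem _ (Subgroup.mem_zpowers A) m
    · rintro ⟨n, rfl⟩
      exact ⟨kleinA ^ n, by rw [map_zpow, hA]⟩
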